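/- Let $F$ be a field of characteristic zero and $K = F(x)$ the rational function field with derivation $D = d/dx$. For every $f \in K$ there exist $g, h \in K$ such that $f = D(g) + h$, where $h = a/b$ with $a, b \in F[x]$ coprime, $b$ squarefree, and $\deg a < \deg b$. Moreover, $f = D(g')$ for some $g' \in K$ if and only if $h = 0$. -/

import Mathlib

open Polynomial

section Helpers

variable {F : Type*} [Field F] [CharZero F]

private lemma exists_antideriv (p : Polynomial F) : ∃ q : Polynomial F, derivative q = p := by
  refine ⟨∑ i ∈ Finset.range (p.natDegree + 1), C (p.coeff i * ((i : F) + 1)⁻¹) * X ^ (i + 1), ?_⟩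
  rw [map_sum]
  conv_rhs => rw [p.as_sum_range' _ (Nat.lt_succ_self _)]
  refine Finset.sum_congr rfl fun i _ => ?_
  rw [derivative_C_mul_X_pow]
  push_cast
  rw [mul_assoc, inv_mul_cancel₀ (Nat.cast_add_one_ne_zero i), mul_one]
  simp [Polynomial.C_mul_X_pow_eq_monomial]

private lemma D_algebraMap (D : Derivation F (RatFunc F) (RatFunc F)) (hD : D RatFunc.X = 1)
    (p : Polynomial F) :
    D (algebraMap (Polynomial F) (RatFunc F) p) = algebraMap _ _ (derivative p) := by
  induction p using Polynomial.induction_on with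
  | C a =>
      have : (RatFunc.C a : RatFunc F) = a • 1 := by rw [RatFunc.smul_eq_C_mul, mul_one]
      simp [RatFunc.algebraMap_C, this]
  | add p q hp hq => simp [hp, hq]
  | monomial n a ih =>
      rw [map_mul, RatFunc.algebraMap_C, ← RatFunc.smul_eq_C_mul, D.map_smul,
        map_pow, RatFunc.algebraMap_X, Derivation.leibniz_pow, hD]
      rw [derivative_C_mul_X_pow, map_mul, RatFunc.algebraMap_C, ← RatFunc.smul_eq_C_mul]
      rw [map_pow, RatFunc.algebraMap_X]
      push_cast
      simp only [nsmul_eq_mul, smul_eq_mul, mul_one, RatFunc.smul_eq_C_mul, map_mul, map_add,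
        map_one, map_natCast, Nat.cast_add, Nat.cast_one]
      ring

private lemma D_div (D : Derivation F (RatFunc F) (RatFunc F)) (hD : D RatFunc.X = 1)
    (p s : Polynomial F) :
    D (algebraMap (Polynomial F) (RatFunc F) p / algebraMap (Polynomial F) (RatFunc F) s)
      = algebraMap (Polynomial F) (RatFunc F) (derivative p * s - p * derivative s)
        / algebraMap (Polynomial F) (RatFunc F) (s ^ 2) := by
  rw [Derivation.leibniz_div, D_algebraMap D hD, D_algebraMap D hD, smul_eq_mul, smul_eq_mul,
    smul_eq_mul, map_sub, map_mul, map_mul, map_pow]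
  ring

private lemma deriv_ne (q : Polynomial F) (hq : Irreducible q) : ¬ q ∣ derivative q := by
  have hdeg : 0 < q.natDegree := hq.natDegree_pos
  have hq' : derivative q ≠ 0 := fun h =>
    hdeg.ne' (natDegree_eq_zero_of_derivative_eq_zero h)
  intro hdvd
  have h1 : q.natDegree ≤ (derivative q).natDegree := natDegree_le_of_dvd hdvd hq'
  have h2 : (derivative q).natDegree < q.natDegree := natDegree_derivative_lt hdeg.ne'
  omega

/-- Core Hermite reduction: every `r/d` is `D g + a/b` with `b` squarefree. -/
private lemma hermite_core (D : Derivation F (RatFunc F) (RatFunc F)) (hD : D RatFunc.X = 1) :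
    ∀ (n : ℕ) (d : Polynomial F), d.natDegree ≤ n → d ≠ 0 → ∀ r : Polynomial F,
    ∃ (g : RatFunc F) (a b : Polynomial F), Squarefree b ∧
      algebraMap (Polynomial F) (RatFunc F) r / algebraMap (Polynomial F) (RatFunc F) d
        = D g + algebraMap (Polynomial F) (RatFunc F) a
            / algebraMap (Polynomial F) (RatFunc F) b := by
  intro n
  induction n using Nat.strong_induction_on with
  | _ n IH =>
    intro d hdn hd0 r
    by_cases hsq : Squarefree d
    · exact ⟨0, r, d, hsq, by rw [map_zero, zero_add]⟩
    · rw [Squarefree] at hsq; push_neg at hsq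
      obtain ⟨x, hxd, hxu⟩ := hsq
      have hx0 : x ≠ 0 := by rintro rfl; exact hd0 (zero_dvd_iff.mp (by simpa using hxd))
      obtain ⟨q, hqirr, hqx⟩ := WfDvdMonoid.exists_irreducible_factor hxu hx0
      have hq2 : q * q ∣ d := dvd_trans (mul_dvd_mul hqx hqx) hxd
      have hq0 : q ≠ 0 := hqirr.ne_zero
      have hqdeg : 0 < q.natDegree := hqirr.natDegree_pos
      have hfin : FiniteMultiplicity q d := FiniteMultiplicity.of_not_isUnit hqirr.not_isUnit hd0
      obtain ⟨e, hde, hqe⟩ := hfin.exists_eq_pow_mul_and_not_dvd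
      have hk2 : 2 ≤ multiplicity q d :=
        hfin.le_multiplicity_of_pow_dvd (by rwa [pow_two])
      obtain ⟨N, hN⟩ : ∃ N, multiplicity q d = N + 2 := ⟨multiplicity q d - 2, by omega⟩
      rw [hN] at hde
      have he0 : e ≠ 0 := by rintro rfl; exact hd0 (by simpa using hde)
      obtain ⟨u, v, huv⟩ : IsCoprime (q ^ (N + 2)) e :=
        ((hqirr.coprime_iff_not_dvd).mpr hqe).pow_left
      obtain ⟨α, β, hab⟩ : IsCoprime q (derivative q) :=
        (hqirr.coprime_iff_not_dvd).mpr (deriv_ne q hqirr)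
      set μ : F := ((N : F) + 1)⁻¹ with hμdef
      have hμ : (C μ : Polynomial F) * C ((N : F) + 1) = 1 := by
        rw [← C_mul, hμdef, inv_mul_cancel₀ (Nat.cast_add_one_ne_zero N), C_1]
      set c : Polynomial F := r * v * β with hc
      set A : Polynomial F := (r * v * α + C μ * derivative c) * e + r * u * q ^ (N + 1) with hA
      have key : r * q ^ (N + 1) =
          (C μ * c * (C ((N : F) + 1) * q ^ N * derivative q)
              - q ^ (N + 1) * (C μ * derivative c)) * (q * e)
            + A * (q ^ (N + 1) * q) := by
        rw [hA, hc]
        linear_combination (-(r * v * β * q ^ (N + 1) * derivative q * e)) * hμ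
          + (-(q ^ (N + 1) * r * v * e)) * hab + (-(q ^ (N + 1) * r)) * huv
      -- the analytic step
      have hQ : algebraMap (Polynomial F) (RatFunc F) q ≠ 0 := RatFunc.algebraMap_ne_zero hq0
      have hE : algebraMap (Polynomial F) (RatFunc F) e ≠ 0 := RatFunc.algebraMap_ne_zero he0
      have step : algebraMap (Polynomial F) (RatFunc F) r
            / algebraMap (Polynomial F) (RatFunc F) d
          = D (- (algebraMap (Polynomial F) (RatFunc F) (C μ * c)
                / algebraMap (Polynomial F) (RatFunc F) (q ^ (N + 1))))
            + algebraMap (Polynomial F) (RatFunc F) A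
              / algebraMap (Polynomial F) (RatFunc F) (q ^ (N + 1) * e) := by
        have hS2 : algebraMap (Polynomial F) (RatFunc F) ((q ^ (N + 1)) ^ 2) ≠ 0 :=
          RatFunc.algebraMap_ne_zero (pow_ne_zero _ (pow_ne_zero _ hq0))
        have hSE : algebraMap (Polynomial F) (RatFunc F) (q ^ (N + 1) * e) ≠ 0 :=
          RatFunc.algebraMap_ne_zero (mul_ne_zero (pow_ne_zero _ hq0) he0)
        have hdK : algebraMap (Polynomial F) (RatFunc F) (q ^ (N + 2) * e) ≠ 0 :=
          RatFunc.algebraMap_ne_zero (by rw [← hde]; exact hd0)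
        rw [map_neg, D_div D hD, hde, ← neg_div, ← map_neg,
          div_add_div _ _ hS2 hSE, div_eq_div_iff hdK (mul_ne_zero hS2 hSE)]
        simp only [← map_mul, ← map_add, ← map_neg]
        refine congrArg _ ?_
        rw [derivative_C_mul, derivative_pow_succ]
        linear_combination (q ^ (N + 1) * q ^ (N + 1) * e) * key
      have hd'0 : q ^ (N + 1) * e ≠ 0 := mul_ne_zero (pow_ne_zero _ hq0) he0
      have hdeg' : (q ^ (N + 1) * e).natDegree < n := by
        have h1 : (q ^ (N + 1) * e).natDegree = (N + 1) * q.natDegree + e.natDegree := by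
          rw [natDegree_mul (pow_ne_zero _ hq0) he0, natDegree_pow]
        have h2 : d.natDegree = (N + 2) * q.natDegree + e.natDegree := by
          rw [hde, natDegree_mul (pow_ne_zero _ hq0) he0, natDegree_pow]
        have h3 : (N + 1) * q.natDegree < (N + 2) * q.natDegree :=
          (Nat.mul_lt_mul_right hqdeg).mpr (by omega)
        omega
      obtain ⟨g₁, a, b, hbsq, heq⟩ := IH _ hdeg' (q ^ (N + 1) * e) le_rfl hd'0 A
      refine ⟨- (algebraMap (Polynomial F) (RatFunc F) (C μ * c)
                / algebraMap (Polynomial F) (RatFunc F) (q ^ (N + 1))) + g₁, a, b, hbsq, ?_⟩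
      rw [step, heq, map_add]
      ring

private lemma no_simple_pole (a b p s : Polynomial F)
    (hab : IsCoprime a b) (hbsq : Squarefree b) (hdeg : a.degree < b.degree) (ha0 : a ≠ 0)
    (hps : IsCoprime p s) (hs0 : s ≠ 0)
    (heq : a * s ^ 2 = b * (derivative p * s - p * derivative s)) : False := by
  have hb0 : b ≠ 0 := hbsq.ne_zero
  have hbu : ¬ IsUnit b := by
    intro h
    have hd0 : b.degree = 0 := Polynomial.degree_eq_zero_of_isUnit h
    have : (0 : WithBot ℕ) ≤ a.degree := Polynomial.zero_le_degree_iff.mpr ha0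
    rw [hd0] at hdeg
    exact absurd (lt_of_le_of_lt this hdeg) (lt_irrefl _)
  obtain ⟨q, hqirr, hqb⟩ := WfDvdMonoid.exists_irreducible_factor hbu hb0
  have hqprime : Prime q := hqirr.prime
  have hq0 : q ≠ 0 := hqirr.ne_zero
  have hqa : ¬ q ∣ a := fun h => hqirr.not_isUnit (hab.isUnit_of_dvd' h hqb)
  have hqs : q ∣ s := by
    have h1 : q ∣ a * s ^ 2 := heq ▸ hqb.mul_right _
    rcases hqprime.dvd_or_dvd h1 with h | h
    · exact absurd h hqa
    · exact hqprime.dvd_of_dvd_pow h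
  have hfin : FiniteMultiplicity q s := FiniteMultiplicity.of_not_isUnit hqirr.not_isUnit hs0
  obtain ⟨t, hst, hqt⟩ := hfin.exists_eq_pow_mul_and_not_dvd
  have hk1 : 1 ≤ multiplicity q s := hfin.le_multiplicity_of_pow_dvd (by simpa using hqs)
  obtain ⟨j, hj⟩ : ∃ j, multiplicity q s = j + 1 := ⟨multiplicity q s - 1, by omega⟩
  rw [hj] at hst
  obtain ⟨c, hbc⟩ := hqb
  have hqc : ¬ q ∣ c := by
    rintro ⟨w, rfl⟩
    exact hqirr.not_isUnit (hbsq q ⟨w, by rw [hbc]; ring⟩)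
  have key2 : q ^ (j + 1) * (a * q ^ (j + 1) * t ^ 2)
      = q ^ (j + 1) * (c * (derivative p * q * t - C ((j : F) + 1) * p * derivative q * t
          - p * q * derivative t)) := by
    have h := heq
    rw [hst, hbc] at h
    rw [derivative_mul, derivative_pow_succ] at h
    linear_combination h
  have key3 := mul_left_cancel₀ (pow_ne_zero _ hq0) key2
  have hqdvd : q ∣ c * (derivative p * q * t - C ((j : F) + 1) * p * derivative q * t
      - p * q * derivative t) := key3 ▸ ⟨a * q ^ j * t ^ 2, by ring⟩
  rcases hqprime.dvd_or_dvd hqdvd with h | h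
  · exact hqc h
  · have h2 : q ∣ C ((j : F) + 1) * p * derivative q * t := by
      obtain ⟨w, hw⟩ := h
      exact ⟨derivative p * t - p * derivative t - w, by linear_combination -hw⟩
    have hCu : IsUnit (C ((j : F) + 1)) := isUnit_C.mpr (IsUnit.mk0 _ (Nat.cast_add_one_ne_zero j))
    rcases hqprime.dvd_or_dvd h2 with h3 | h3
    · rcases hqprime.dvd_or_dvd h3 with h4 | h4
      · rcases hqprime.dvd_or_dvd h4 with h5 | h5
        · exact hqirr.not_isUnit (isUnit_of_dvd_unit h5 hCu)
        · exact hqirr.not_isUnit (hps.isUnit_of_dvd' h5 hqs)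
      · exact deriv_ne q hqirr h4
    · exact hqt h3

private lemma reduce_step (D : Derivation F (RatFunc F) (RatFunc F)) (hD : D RatFunc.X = 1)
    (a₁ b₁ : Polynomial F) (hb : Squarefree b₁) :
    ∃ (g₂ : RatFunc F) (a b : Polynomial F), IsCoprime a b ∧ Squarefree b ∧
      a.degree < b.degree ∧
      algebraMap (Polynomial F) (RatFunc F) a₁ / algebraMap (Polynomial F) (RatFunc F) b₁
        = D g₂ + algebraMap (Polynomial F) (RatFunc F) a
            / algebraMap (Polynomial F) (RatFunc F) b := by
  classical
  have hb₁0 : b₁ ≠ 0 := hb.ne_zero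
  set G := GCDMonoid.gcd a₁ b₁ with hG
  have hG0 : G ≠ 0 := gcd_ne_zero_of_right hb₁0
  set a₂ := a₁ / G with ha₂
  set b₂ := b₁ / G with hb₂
  have hcop : IsCoprime a₂ b₂ := isCoprime_div_gcd_div_gcd hb₁0
  have hb₁eq : G * b₂ = b₁ := EuclideanDomain.mul_div_cancel' hG0 (gcd_dvd_right a₁ b₁)
  have ha₁eq : G * a₂ = a₁ := EuclideanDomain.mul_div_cancel' hG0 (gcd_dvd_left a₁ b₁)
  have hb₂0 : b₂ ≠ 0 := fun h => hb₁0 (by rw [← hb₁eq, h, mul_zero])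
  have hb₂sq : Squarefree b₂ := hb.squarefree_of_dvd ⟨G, by rw [← hb₁eq]; ring⟩
  have hfrac1 : algebraMap (Polynomial F) (RatFunc F) a₁ / algebraMap (Polynomial F) (RatFunc F) b₁
      = algebraMap (Polynomial F) (RatFunc F) a₂ / algebraMap (Polynomial F) (RatFunc F) b₂ := by
    rw [← ha₁eq, ← hb₁eq, map_mul, map_mul,
      mul_div_mul_left _ _ (RatFunc.algebraMap_ne_zero hG0)]
  -- monicize
  set l : F := b₂.leadingCoeff with hl
  have hl0 : l ≠ 0 := leadingCoeff_ne_zero.mpr hb₂0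
  have hCu : IsUnit (C l⁻¹) := isUnit_C.mpr (IsUnit.mk0 _ (inv_ne_zero hl0))
  set a₃ := a₂ * C l⁻¹ with ha₃
  set b₃ := b₂ * C l⁻¹ with hb₃
  have hmonic : b₃.Monic := monic_mul_leadingCoeff_inv hb₂0
  have hb₃0 : b₃ ≠ 0 := hmonic.ne_zero
  have hcop₃ : IsCoprime a₃ b₃ := by
    rw [ha₃, hb₃]
    exact (isCoprime_mul_unit_right hCu _ _).mpr hcop
  have hb₃sq : Squarefree b₃ := Squarefree.squarefree_of_dvd
    ⟨C l, by rw [hb₃, mul_assoc, ← C_mul, inv_mul_cancel₀ hl0, C_1, mul_one]⟩ hb₂sq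
  have hfrac2 : algebraMap (Polynomial F) (RatFunc F) a₂ / algebraMap (Polynomial F) (RatFunc F) b₂
      = algebraMap (Polynomial F) (RatFunc F) a₃ / algebraMap (Polynomial F) (RatFunc F) b₃ := by
    rw [ha₃, hb₃, map_mul, map_mul,
      mul_div_mul_right _ _ (RatFunc.algebraMap_ne_zero hCu.ne_zero)]
  -- divide
  set Rm := a₃ %ₘ b₃ with hRm
  set Qp := a₃ /ₘ b₃ with hQp
  have hsum : Rm + b₃ * Qp = a₃ := modByMonic_add_div a₃ b₃
  have hdeg : Rm.degree < b₃.degree := degree_modByMonic_lt a₃ hmonic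
  have hcoprm : IsCoprime Rm b₃ := by
    have h1 : a₃ + b₃ * (-Qp) = Rm := by linear_combination -hsum
    exact h1 ▸ hcop₃.add_mul_left_left (-Qp)
  obtain ⟨Sp, hSp⟩ := exists_antideriv Qp
  refine ⟨algebraMap (Polynomial F) (RatFunc F) Sp, Rm, b₃, hcoprm, hb₃sq, hdeg, ?_⟩
  rw [hfrac1, hfrac2, D_algebraMap D hD, hSp]
  have hb₃K : algebraMap (Polynomial F) (RatFunc F) b₃ ≠ 0 := RatFunc.algebraMap_ne_zero hb₃0
  have hsumK := congrArg (algebraMap (Polynomial F) (RatFunc F)) hsum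
  simp only [map_add, map_mul] at hsumK
  field_simp
  linear_combination -hsumK

end Helpers

/-- Hermite reduction: over a field `F` of characteristic zero, every rational function
`f ∈ F(x)` can be written `f = D(g) + a/b` with `a, b` coprime polynomials, `b`
squarefree, `deg a < deg b`; moreover `f` is a derivative in `F(x)` iff `a = 0`. -/
theorem stmt_6 (F : Type*) [Field F] [CharZero F]
    (D : Derivation F (RatFunc F) (RatFunc F)) (hD : D RatFunc.X = 1)
    (f : RatFunc F) :
    ∃ (g : RatFunc F) (a b : Polynomial F),
      IsCoprime a b ∧ Squarefree b ∧ a.degree < b.degree ∧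
      f = D g + algebraMap (Polynomial F) (RatFunc F) a /
        algebraMap (Polynomial F) (RatFunc F) b ∧
      ((∃ g' : RatFunc F, f = D g') ↔ a = 0) := by
  obtain ⟨g₁, a₁, b₁, hb₁sq, heq₁⟩ :=
    hermite_core D hD f.denom.natDegree f.denom le_rfl (RatFunc.denom_ne_zero f) f.num
  obtain ⟨g₂, a, b, hcop, hbsq, hdeg, heq₂⟩ := reduce_step D hD a₁ b₁ hb₁sq
  have hf : f = D (g₁ + g₂) + algebraMap (Polynomial F) (RatFunc F) a
      / algebraMap (Polynomial F) (RatFunc F) b := by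
    conv_lhs => rw [← RatFunc.num_div_denom f]
    rw [heq₁, heq₂, map_add]
    ring
  by_cases ha : a = 0
  · refine ⟨g₁ + g₂, 0, 1, isCoprime_zero_left.mpr isUnit_one, squarefree_one, ?_, ?_, ?_⟩
    · simp [degree_one]
    · rw [hf, ha]; simp
    · exact ⟨fun _ => rfl, fun _ => ⟨g₁ + g₂, by rw [hf, ha]; simp⟩⟩
  · refine ⟨g₁ + g₂, a, b, hcop, hbsq, hdeg, hf, ?_, ?_⟩
    · rintro ⟨g', hg'⟩
      exfalso
      set h : RatFunc F := g' - (g₁ + g₂) with hh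
      have hDh : algebraMap (Polynomial F) (RatFunc F) a
            / algebraMap (Polynomial F) (RatFunc F) b = D h := by
        rw [hh, map_sub, ← hg', hf]; ring
      have hnum : algebraMap (Polynomial F) (RatFunc F) h.num
          / algebraMap (Polynomial F) (RatFunc F) h.denom = h := RatFunc.num_div_denom h
      rw [← hnum, D_div D hD] at hDh
      have hbK : algebraMap (Polynomial F) (RatFunc F) b ≠ 0 :=
        RatFunc.algebraMap_ne_zero hbsq.ne_zero
      have hs2K : algebraMap (Polynomial F) (RatFunc F) (h.denom ^ 2) ≠ 0 :=
        RatFunc.algebraMap_ne_zero (pow_ne_zero _ (RatFunc.denom_ne_zero h))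
      rw [div_eq_div_iff hbK hs2K, ← map_mul, ← map_mul] at hDh
      have hpoly := RatFunc.algebraMap_injective F hDh
      exact no_simple_pole a b h.num h.denom hcop hbsq hdeg ha
        (RatFunc.isCoprime_num_denom h) (RatFunc.denom_ne_zero h)
        (by linear_combination hpoly)
    · intro h0; exact absurd h0 ha
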